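/- Let n ≥ 2, t ≥ 1, and α_1,…,α_n ∈ ℝ, and for each index m let s_m = exp(α_m/t)/Σ_{l=1}^n exp(α_l/t) denote the tempered softmax (so 0 < s_m < 1). If α_i ≤ α_j, then α_i + log(1 − s_i) ≤ α_j + log(1 − s_j). In other words, a single update step of the iterative softmax top-k relaxation preserves the ordering of the logits when t ≥ 1. -/

import Mathlib

/-- Tempered softmax of logits `α : Fin n → ℝ` at temperature `t`. -/
noncomputable def softmaxT {n : ℕ} (t : ℝ) (α : Fin n → ℝ) (i : Fin n) : ℝ :=
  Real.exp (α i / t) / ∑ m, Real.exp (α m / t)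

/-- A single update step of the iterative softmax top-k relaxation preserves the
ordering of the logits when `t ≥ 1`: if `αᵢ ≤ αⱼ` then
`αᵢ + log(1 − sᵢ) ≤ αⱼ + log(1 − sⱼ)`, where `s` is the tempered softmax of `α`. -/
theorem step_preserves_order {n : ℕ} (hn : 2 ≤ n) (t : ℝ) (ht : 1 ≤ t)
    (α : Fin n → ℝ) (i j : Fin n) (h : α i ≤ α j) :
    α i + Real.log (1 - softmaxT t α i) ≤ α j + Real.log (1 - softmaxT t α j) := by
  rcases eq_or_ne i j with rfl | hij
  · rfl
  have ht0 : (0:ℝ) < t := lt_of_lt_of_le one_pos ht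
  set S : ℝ := ∑ m, Real.exp (α m / t) with hSdef
  have hS : 0 < S := Finset.sum_pos (fun m _ => Real.exp_pos _)
    ⟨i, Finset.mem_univ i⟩
  -- each term is strictly less than S
  have hlt : ∀ m : Fin n, Real.exp (α m / t) < S := by
    intro m
    have hne : (Finset.univ.erase m).Nonempty := by
      rw [← Finset.card_pos, Finset.card_erase_of_mem (Finset.mem_univ m),
        Finset.card_univ, Fintype.card_fin]
      omega
    have := Finset.sum_pos (f := fun l : Fin n => Real.exp (α l / t))
      (fun l _ => Real.exp_pos _) hne
    have hsum : S = Real.exp (α m / t) + ∑ l ∈ Finset.univ.erase m, Real.exp (α l / t) :=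
      (Finset.add_sum_erase _ _ (Finset.mem_univ m)).symm
    linarith
  have hrw : ∀ m : Fin n, 1 - softmaxT t α m = (S - Real.exp (α m / t)) / S := by
    intro m
    simp only [softmaxT, ← hSdef]; rw [sub_div, div_self hS.ne']
  rw [hrw i, hrw j,
    Real.log_div (by linarith [hlt i]) (ne_of_gt hS),
    Real.log_div (by linarith [hlt j]) (ne_of_gt hS)]
  have hgoal : α i + Real.log (S - Real.exp (α i / t)) ≤
      α j + Real.log (S - Real.exp (α j / t)) := by
    have h1 : 0 < S - Real.exp (α i / t) := by linarith [hlt i]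
    have h2 : 0 < S - Real.exp (α j / t) := by linarith [hlt j]
    have key : Real.exp (α i) * (S - Real.exp (α i / t)) ≤
        Real.exp (α j) * (S - Real.exp (α j / t)) := by
      -- sum contains both terms, i ≠ j
      have hpair : Real.exp (α i / t) + Real.exp (α j / t) ≤ S := by
        have hsub : ({i, j} : Finset (Fin n)) ⊆ Finset.univ := Finset.subset_univ _
        have := Finset.sum_le_sum_of_subset_of_nonneg hsub
          (fun l _ _ => (Real.exp_pos (α l / t)).le)
        rwa [Finset.sum_pair hij] at this
      have hR0 : 0 ≤ S - Real.exp (α i / t) - Real.exp (α j / t) := by linarith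
      have hu : Real.exp (α i - α j) ≤ 1 := by
        rw [Real.exp_le_one_iff]; linarith
      have hub : Real.exp (α i - α j) * Real.exp (α j / t) ≤ Real.exp (α i / t) := by
        rw [← Real.exp_add, Real.exp_le_exp]
        have hd : α i - α j ≤ (α i - α j) / t := by
          rw [le_div_iff₀ ht0]; nlinarith
        have hq : (α i - α j) / t = α i / t - α j / t := sub_div _ _ _
        linarith
      have hkey2 : Real.exp (α i - α j) * (S - Real.exp (α i / t)) ≤
          S - Real.exp (α j / t) := by
        have h3 : Real.exp (α i - α j) * (S - Real.exp (α i / t) - Real.exp (α j / t)) ≤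
            S - Real.exp (α i / t) - Real.exp (α j / t) :=
          mul_le_of_le_one_left hR0 hu
        nlinarith [h3, hub]
      have := mul_le_mul_of_nonneg_left hkey2 (Real.exp_pos (α j)).le
      rw [← mul_assoc, ← Real.exp_add] at this
      have e3 : α j + (α i - α j) = α i := by ring
      rw [e3] at this
      exact this
    calc α i + Real.log (S - Real.exp (α i / t))
        = Real.log (Real.exp (α i) * (S - Real.exp (α i / t))) := by
          rw [Real.log_mul (Real.exp_ne_zero _) (ne_of_gt h1), Real.log_exp]
      _ ≤ Real.log (Real.exp (α j) * (S - Real.exp (α j / t))) :=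
          Real.log_le_log (by positivity) key
      _ = α j + Real.log (S - Real.exp (α j / t)) := by
          rw [Real.log_mul (Real.exp_ne_zero _) (ne_of_gt h2), Real.log_exp]
  linarith
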